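/- Let n be a positive integer, M ≥ 0, and z_1, …, z_n ∈ [0,1]. Then Σ_{k=1}^n z_k / sqrt( max{ M + Σ_{i=1}^{k−1} z_i , 1 } ) ≤ (√2 + 1) · sqrt( Σ_{i=1}^n z_i ). -/

import Mathlib

lemma aux_stmt6 (T w : ℝ) (hT : 0 ≤ T) (hw : 0 ≤ w) (hw1 : w ≤ 1) :
    w / Real.sqrt (max T 1) ≤ (Real.sqrt 2 + 1) * (Real.sqrt (T + w) - Real.sqrt T) := by
  set d := Real.sqrt (max T 1) with hd
  have hd1 : 1 ≤ d := by
    have : Real.sqrt 1 ≤ d := Real.sqrt_le_sqrt (le_max_right _ _)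
    simpa using this
  have hdpos : 0 < d := lt_of_lt_of_le one_pos hd1
  set A := Real.sqrt (T + w) with hA
  set B := Real.sqrt T with hB
  have hAB : 0 ≤ A - B := by
    have : B ≤ A := Real.sqrt_le_sqrt (by linarith)
    linarith
  have hprod : (A - B) * (A + B) = w := by
    have h1 : A * A = T + w := Real.mul_self_sqrt (by linarith)
    have h2 : B * B = T := Real.mul_self_sqrt hT
    nlinarith
  have hsum : A + B ≤ (Real.sqrt 2 + 1) * d := by
    rcases le_or_gt 1 T with h | h
    · have hmax : max T 1 = T := max_eq_left h
      have hdB : d = B := by rw [hd, hB, hmax]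
      have hA2 : A ≤ Real.sqrt 2 * B := by
        rw [hB, ← Real.sqrt_mul (by norm_num : (0:ℝ) ≤ 2)]
        exact Real.sqrt_le_sqrt (by linarith)
      rw [hdB]; nlinarith [Real.sqrt_nonneg T, Real.sqrt_nonneg (2:ℝ)]
    · have hmax : max T 1 = 1 := max_eq_right h.le
      have hd1' : d = 1 := by rw [hd, hmax, Real.sqrt_one]
      have hA2 : A ≤ Real.sqrt 2 := Real.sqrt_le_sqrt (by linarith)
      have hB2 : B ≤ 1 := by
        have : B ≤ Real.sqrt 1 := Real.sqrt_le_sqrt h.le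
        simpa using this
      rw [hd1']; linarith
  rw [div_le_iff₀ hdpos]
  calc w = (A - B) * (A + B) := hprod.symm
    _ ≤ (A - B) * ((Real.sqrt 2 + 1) * d) := mul_le_mul_of_nonneg_left hsum hAB
    _ = (Real.sqrt 2 + 1) * (A - B) * d := by ring

/-- For `z_1, …, z_n ∈ [0,1]` (indexed `z 0, …, z (n−1)` here) and `M ≥ 0`,
`Σ_k z_k / sqrt(max{M + Σ_{i<k} z_i, 1}) ≤ (√2 + 1)·sqrt(Σ_i z_i)`. -/
theorem stmt_6 (n : ℕ) (hn : 0 < n) (M : ℝ) (hM : 0 ≤ M) (z : ℕ → ℝ)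
    (hz0 : ∀ k, 0 ≤ z k) (hz1 : ∀ k, z k ≤ 1) :
    ∑ k ∈ Finset.range n, z k / Real.sqrt (max (M + ∑ i ∈ Finset.range k, z i) 1)
      ≤ (Real.sqrt 2 + 1) * Real.sqrt (∑ i ∈ Finset.range n, z i) := by
  set T : ℕ → ℝ := fun k => ∑ i ∈ Finset.range k, z i with hT
  have hTnn : ∀ k, 0 ≤ T k := fun k => Finset.sum_nonneg fun i _ => hz0 i
  have step1 : ∀ k, z k / Real.sqrt (max (M + T k) 1) ≤ z k / Real.sqrt (max (T k) 1) := by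
    intro k
    have h1 : (1:ℝ) ≤ Real.sqrt (max (T k) 1) := by
      have := Real.sqrt_le_sqrt (le_max_right (T k) 1)
      simpa using this
    have h2 : Real.sqrt (max (T k) 1) ≤ Real.sqrt (max (M + T k) 1) :=
      Real.sqrt_le_sqrt (max_le_max (by linarith [hTnn k]) le_rfl)
    exact div_le_div_of_nonneg_left (hz0 k) (by linarith) h2
  calc ∑ k ∈ Finset.range n, z k / Real.sqrt (max (M + T k) 1)
      ≤ ∑ k ∈ Finset.range n, z k / Real.sqrt (max (T k) 1) :=
        Finset.sum_le_sum fun k _ => step1 k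
    _ ≤ ∑ k ∈ Finset.range n, (Real.sqrt 2 + 1) * (Real.sqrt (T (k+1)) - Real.sqrt (T k)) := by
        apply Finset.sum_le_sum
        intro k _
        have : T (k+1) = T k + z k := by rw [hT]; exact Finset.sum_range_succ z k
        rw [this]
        exact aux_stmt6 (T k) (z k) (hTnn k) (hz0 k) (hz1 k)
    _ = (Real.sqrt 2 + 1) * (Real.sqrt (T n) - Real.sqrt (T 0)) := by
        rw [← Finset.mul_sum, Finset.sum_range_sub (fun k => Real.sqrt (T k))]
    _ ≤ (Real.sqrt 2 + 1) * Real.sqrt (T n) := by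
        have : Real.sqrt (T 0) = 0 := by simp [hT]
        rw [this]; ring_nf; exact le_rfl
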